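/- Let A₁ and A₂ be MR-subalgebras of 𝓛ₙ, neither equal to {𝟙}. Then the intervals [{𝟙}, A₁] and [{𝟙}, A₂] in the finite poset of MR-subalgebras of 𝓛ₙ ordered by inclusion are order-isomorphic if and only if A₁ and A₂ have the same dimension. -/

import Mathlib

@[ext] structure Cube (n : ℕ) where
  pos : Finset (Fin n)
  neg : Finset (Fin n)
  disj : Disjoint pos neg

namespace Cube
variable {n : ℕ}

instance : PartialOrder (Cube n) where
  le x y := y.pos ⊆ x.pos ∧ y.neg ⊆ x.neg
  le_refl x := ⟨subset_rfl, subset_rfl⟩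
  le_trans x y z h₁ h₂ := ⟨h₂.1.trans h₁.1, h₂.2.trans h₁.2⟩
  le_antisymm x y h₁ h₂ :=
    Cube.ext (subset_antisymm h₂.1 h₁.1) (subset_antisymm h₂.2 h₁.2)

instance : OrderTop (Cube n) where
  top := ⟨∅, ∅, by simp⟩
  le_top x := ⟨Finset.empty_subset _, Finset.empty_subset _⟩

instance : SemilatticeSup (Cube n) where
  sup x y := ⟨x.pos ∩ y.pos, x.neg ∩ y.neg,
    x.disj.mono Finset.inter_subset_left Finset.inter_subset_left⟩
  le_sup_left x y := ⟨Finset.inter_subset_left, Finset.inter_subset_left⟩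
  le_sup_right x y := ⟨Finset.inter_subset_right, Finset.inter_subset_right⟩
  sup_le x y z hx hy := ⟨Finset.subset_inter hx.1 hy.1, Finset.subset_inter hx.2 hy.2⟩

/-- The reflection `Δ(x, y)` of `y` through the centre of `x`. -/
def delta (x y : Cube n) : Cube n :=
  ⟨x.pos ∪ (y.neg \ x.neg), x.neg ∪ (y.pos \ x.pos), by
    simp only [Finset.disjoint_union_left, Finset.disjoint_union_right]
    refine ⟨⟨x.disj, Finset.sdiff_disjoint⟩, Finset.disjoint_sdiff, ?_⟩
    exact y.disj.symm.mono Finset.sdiff_subset Finset.sdiff_subset⟩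

lemma delta_le (x y : Cube n) : delta x y ≤ x :=
  ⟨Finset.subset_union_left, Finset.subset_union_left⟩

/-- The co-rank of a face of the `n`-cube. -/
def corank (x : Cube n) : ℕ := (x.pos ∪ x.neg).card

/-- The set of coatoms of `𝓛ₙ` lying above `a`. -/
def coatomsAbove (a : Cube n) : Set (Cube n) := {c | corank c = 1 ∧ a ≤ c}

/-- `A` is an MR-subalgebra of `𝓛ₙ`. -/
def IsMRSub (A : Set (Cube n)) : Prop :=
  ⊤ ∈ A ∧ (∀ x ∈ A, ∀ y ∈ A, x ⊔ y ∈ A) ∧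
    (∀ x ∈ A, ∀ y ∈ A, y ≤ x → delta x y ∈ A) ∧
    (∀ x ∈ A, ∀ y ∈ A, ∃ m ∈ A, IsGLB {x, delta (x ⊔ y) y} m)

/-- The coatoms of a subalgebra `A`: maximal elements of `A \ {⊤}`. -/
def coAt (A : Set (Cube n)) : Set (Cube n) :=
  {a | a ∈ A ∧ a ≠ ⊤ ∧ ∀ b ∈ A, b ≠ ⊤ → a ≤ b → b = a}

/-- The coatoms `a` of `A` with `|𝒞ₐ| = i`. -/
def typeSet (A : Set (Cube n)) (i : ℕ) : Set (Cube n) :=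
  {a | a ∈ coAt A ∧ (coatomsAbove a).ncard = i}

/-- An order automorphism of `𝓛ₙ` is a cubic automorphism when it preserves `Δ`. -/
def IsAut (φ : Cube n ≃o Cube n) : Prop :=
  ∀ x y : Cube n, y ≤ x → φ (delta x y) = delta (φ x) (φ y)

/-- The set of automorphisms of `𝓛ₙ`. -/
def AutSet (n : ℕ) : Set (Cube n ≃o Cube n) := {φ | IsAut φ}

/-- An automorphism of the subposet `A` preserving `Δ`. -/
def IsSubAut {A : Set (Cube n)} (ψ : A ≃o A) : Prop :=
  ∀ (x y : A), (y : Cube n) ≤ (x : Cube n) → ∀ h : delta ↑x ↑y ∈ A,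
    (ψ ⟨delta ↑x ↑y, h⟩ : Cube n) = delta ↑(ψ x) ↑(ψ y)

end Cube


namespace Cube
variable {n : ℕ}

@[simp] lemma top_pos : (⊤ : Cube n).pos = ∅ := rfl
@[simp] lemma top_neg : (⊤ : Cube n).neg = ∅ := rfl
@[simp] lemma sup_pos (x y : Cube n) : (x ⊔ y).pos = x.pos ∩ y.pos := rfl
@[simp] lemma sup_neg (x y : Cube n) : (x ⊔ y).neg = x.neg ∩ y.neg := rfl
@[simp] lemma delta_pos' (x y : Cube n) : (delta x y).pos = x.pos ∪ (y.neg \ x.neg) := rfl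
@[simp] lemma delta_neg' (x y : Cube n) : (delta x y).neg = x.neg ∪ (y.pos \ x.pos) := rfl

/-- Coordinate evaluation of a face of the cube. -/
def ev (x : Cube n) (i : Fin n) : SignType :=
  if i ∈ x.pos then 1 else if i ∈ x.neg then -1 else 0

lemma ev_eq_one {x : Cube n} {i : Fin n} : ev x i = 1 ↔ i ∈ x.pos := by
  have hd := Finset.disjoint_left.mp x.disj
  unfold ev
  by_cases h1 : i ∈ x.pos <;> by_cases h2 : i ∈ x.neg <;>
    first
    | exact absurd (hd h1) (fun h => h h2)
    | (simp [h1, h2]; try decide)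

lemma ev_eq_negone {x : Cube n} {i : Fin n} : ev x i = -1 ↔ i ∈ x.neg := by
  have hd := Finset.disjoint_left.mp x.disj
  unfold ev
  by_cases h1 : i ∈ x.pos <;> by_cases h2 : i ∈ x.neg <;>
    first
    | exact absurd (hd h1) (fun h => h h2)
    | (simp [h1, h2]; try decide)

lemma ev_eq_zero {x : Cube n} {i : Fin n} : ev x i = 0 ↔ i ∉ x.pos ∧ i ∉ x.neg := by
  have hd := Finset.disjoint_left.mp x.disj
  unfold ev
  by_cases h1 : i ∈ x.pos <;> by_cases h2 : i ∈ x.neg <;>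
    first
    | exact absurd (hd h1) (fun h => h h2)
    | (simp [h1, h2]; try decide)

lemma ext_ev {x y : Cube n} (h : ∀ i, ev x i = ev y i) : x = y := by
  ext i
  · rw [← ev_eq_one, ← ev_eq_one, h]
  · rw [← ev_eq_negone, ← ev_eq_negone, h]

@[simp] lemma ev_top (i : Fin n) : ev (⊤ : Cube n) i = 0 := by simp [ev]

/-- pointwise join operation on signs -/
def sop (a b : SignType) : SignType := if a = b then a else 0
/-- pointwise reflection operation on signs -/
def dop (a b : SignType) : SignType := if a = 0 then -b else a
/-- pointwise override operation on signs -/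
def fop (a b : SignType) : SignType := if a = 0 then b else a

lemma ev_sup (x y : Cube n) (i : Fin n) : ev (x ⊔ y) i = sop (ev x i) (ev y i) := by
  have hx := Finset.disjoint_left.mp x.disj
  have hy := Finset.disjoint_left.mp y.disj
  simp only [ev, sop, sup_pos, sup_neg, Finset.mem_inter]
  by_cases h1 : i ∈ x.pos <;> by_cases h2 : i ∈ x.neg <;>
    by_cases h3 : i ∈ y.pos <;> by_cases h4 : i ∈ y.neg <;>
    first
      | exact absurd (hx h1) (fun h => h h2)
      | exact absurd (hy h3) (fun h => h h4)
      | simp_all <;> decide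

lemma ev_delta (x y : Cube n) (i : Fin n) : ev (delta x y) i = dop (ev x i) (ev y i) := by
  have hx := Finset.disjoint_left.mp x.disj
  have hy := Finset.disjoint_left.mp y.disj
  simp only [ev, dop, delta_pos', delta_neg', Finset.mem_union, Finset.mem_sdiff]
  by_cases h1 : i ∈ x.pos <;> by_cases h2 : i ∈ x.neg <;>
    by_cases h3 : i ∈ y.pos <;> by_cases h4 : i ∈ y.neg <;>
    first
      | exact absurd (hx h1) (fun h => h h2)
      | exact absurd (hy h3) (fun h => h h4)
      | simp_all <;> decide

lemma le_iff_ev {x y : Cube n} : x ≤ y ↔ ∀ i, ev y i = 0 ∨ ev x i = ev y i := by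
  constructor
  · rintro ⟨hp, hn⟩ i
    rcases h : ev y i with _ | _ | _
    · exact Or.inl rfl
    · exact Or.inr (ev_eq_negone.mpr (hn (ev_eq_negone.mp h)))
    · exact Or.inr (ev_eq_one.mpr (hp (ev_eq_one.mp h)))
  · intro h
    constructor
    · intro i hi
      rcases h i with h0 | he
      · exact absurd (ev_eq_zero.mp h0).1 (fun h' => h' hi)
      · exact ev_eq_one.mp (he.trans (ev_eq_one.mpr hi))
    · intro i hi
      rcases h i with h0 | he
      · exact absurd (ev_eq_zero.mp h0).2 (fun h' => h' hi)
      · exact ev_eq_negone.mp (he.trans (ev_eq_negone.mpr hi))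

/-- Build a face from a sign vector. -/
def ofFun (f : Fin n → SignType) : Cube n :=
  ⟨Finset.univ.filter (fun i => f i = 1), Finset.univ.filter (fun i => f i = -1), by
    rw [Finset.disjoint_left]
    intro a ha hb
    simp only [Finset.mem_filter] at ha hb
    rw [ha.2] at hb
    exact absurd hb.2 (by decide)⟩

@[simp] lemma ev_ofFun (f : Fin n → SignType) (i : Fin n) : ev (ofFun f) i = f i := by
  unfold ev ofFun
  rcases h : f i with _ | _ | _ <;> simp [h]

end Cube
namespace Cube
variable {n : ℕ}

lemma sign_lb1 : ∀ a b : SignType, a = 0 ∨ dop a b = a := by decide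
lemma sign_lb2 : ∀ a b : SignType, dop (sop a b) b = 0 ∨ dop a b = dop (sop a b) b := by decide
lemma sign_glb : ∀ w a b : SignType,
    (a = 0 ∨ w = a) → (dop (sop a b) b = 0 ∨ w = dop (sop a b) b) →
    (dop a b = 0 ∨ w = dop a b) := by decide

lemma isGLB_delta (x y : Cube n) : IsGLB {x, delta (x ⊔ y) y} (delta x y) := by
  constructor
  · rintro z hz
    simp only [Set.mem_insert_iff, Set.mem_singleton_iff] at hz
    rcases hz with rfl | rfl
    · rw [le_iff_ev]
      intro i
      rw [ev_delta]
      exact sign_lb1 _ _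
    · rw [le_iff_ev]
      intro i
      rw [ev_delta, ev_delta, ev_sup]
      exact sign_lb2 _ _
  · intro w hw
    have h1 : w ≤ x := hw (by simp)
    have h2 : w ≤ delta (x ⊔ y) y := hw (by simp)
    rw [le_iff_ev] at h1 h2 ⊢
    intro i
    have := h2 i
    rw [ev_delta, ev_sup] at this
    rw [ev_delta]
    exact sign_glb _ _ _ (h1 i) this

lemma isMRSub_iff {A : Set (Cube n)} :
    IsMRSub A ↔ ⊤ ∈ A ∧ (∀ x ∈ A, ∀ y ∈ A, x ⊔ y ∈ A) ∧ (∀ x ∈ A, ∀ y ∈ A, delta x y ∈ A) := by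
  constructor
  · rintro ⟨h1, h2, h3, h4⟩
    refine ⟨h1, h2, ?_⟩
    intro x hx y hy
    obtain ⟨m, hm, hglb⟩ := h4 x hx y hy
    rwa [hglb.unique (isGLB_delta x y)] at hm
  · rintro ⟨h1, h2, h3⟩
    exact ⟨h1, h2, fun x hx y hy _ => h3 x hx y hy,
      fun x hx y hy => ⟨delta x y, h3 x hx y hy, isGLB_delta x y⟩⟩

end Cube
namespace Cube

section PairE

lemma sign_neg_ne_zero : ∀ w : SignType, w ≠ 0 → -w ≠ 0 := by decide
lemma sop_self : ∀ a : SignType, sop a a = a := by decide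
lemma sop_neg_self : ∀ v : SignType, v ≠ 0 → sop (-v) v = 0 := by decide
lemma fop_zero_left : ∀ b : SignType, fop 0 b = b := by decide
lemma fop_zero_right : ∀ a : SignType, fop a 0 = a := by decide
lemma fop_ne_zero : ∀ a b : SignType, a ≠ 0 → fop a b = a := by decide
lemma sign_caseX : ∀ a b : SignType, a ≠ b →
    (a ≠ 0 ∧ b = 0) ∨ (a = 0 ∧ b ≠ 0) ∨ (a ≠ 0 ∧ b = -a) := by decide
lemma sign_caseY : ∀ a b : SignType, a ≠ -b →
    (a ≠ 0 ∧ b = 0) ∨ (a = 0 ∧ b ≠ 0) ∨ (a ≠ 0 ∧ b = a) := by decide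
lemma sign_caseL : ∀ u r : SignType, u ≠ 0 → r = 0 ∨ r = -u ∨ r = u := by decide
lemma sign_pm : ∀ u a : SignType, u ≠ 0 → a ≠ 0 → a = u ∨ -a = u := by decide

variable {E : SignType × SignType → Prop}

private def PA (E : SignType × SignType → Prop) := ∃ a, a ≠ 0 ∧ E (a, 0)
private def PB (E : SignType × SignType → Prop) := ∃ b, b ≠ 0 ∧ E (0, b)
private def PV (E : SignType × SignType → Prop) := ∃ v, v ≠ 0 ∧ E (v, -v)
private def PW (E : SignType × SignType → Prop) := ∃ w, w ≠ 0 ∧ E (w, w)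

variable (hEneg : ∀ a b, E (a, b) → E (-a, -b))
  (hEs : ∀ a b a' b', E (a,b) → E (a',b') → E (sop a a', sop b b'))
  (hEf : ∀ a b a' b', E (a,b) → E (a',b') → E (fop a a', fop b b'))

include hEneg in
/-- from `PW` get `(v,v)` for any prescribed nonzero `v` -/
lemma pw_any : PW E → ∀ v : SignType, v ≠ 0 → E (v, v) := by
  rintro ⟨w, hw, hEw⟩ v hv
  rcases sign_pm v w hv hw with h | h
  · rwa [← h]
  · have := hEneg _ _ hEw
    rwa [← h]

include hEneg in
lemma pb_any : PB E → ∀ v : SignType, v ≠ 0 → E (0, v) := by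
  rintro ⟨b, hb, hEb⟩ v hv
  rcases sign_pm v b hv hb with h | h
  · rwa [← h]
  · have := hEneg _ _ hEb
    rw [neg_zero] at this
    rwa [← h]

include hEneg in
lemma pa_any : PA E → ∀ v : SignType, v ≠ 0 → E (v, 0) := by
  rintro ⟨a, ha, hEa⟩ v hv
  rcases sign_pm v a hv ha with h | h
  · rwa [← h]
  · have := hEneg _ _ hEa
    rw [neg_zero] at this
    rwa [← h]

include hEneg hEs in
lemma pv_pw : PV E → PW E → PA E := by
  rintro ⟨v, hv, hEv⟩ hw
  have h2 : E (v, v) := pw_any hEneg hw v hv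
  have := hEs _ _ _ _ hEv h2
  rw [sop_self, sop_neg_self v hv] at this
  exact ⟨v, hv, this⟩

include hEneg hEs hEf in
lemma pb_pv : PB E → PV E → PA E := by
  rintro hb ⟨v, hv, hEv⟩
  have h1 : E (0, v) := pb_any hEneg hb v hv
  have := hEf _ _ _ _ h1 hEv
  rw [fop_zero_left, fop_ne_zero v (-v) hv] at this
  exact pv_pw hEneg hEs ⟨v, hv, hEv⟩ ⟨v, hv, this⟩

include hEneg hEs hEf in
lemma pb_pw : PB E → PW E → PA E := by
  rintro hb ⟨w, hw, hEw⟩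
  have h1 : E (0, -w) := pb_any hEneg hb (-w) (sign_neg_ne_zero w hw)
  have := hEf _ _ _ _ h1 hEw
  rw [fop_zero_left, fop_ne_zero (-w) w (sign_neg_ne_zero w hw)] at this
  exact pv_pw hEneg hEs ⟨w, hw, by simpa using this⟩ ⟨w, hw, hEw⟩

include hEneg hEs hEf in
lemma stepA (hx : ∃ c, E c ∧ c.1 ≠ c.2) (hy : ∃ c, E c ∧ c.1 ≠ -c.2)
    (lp : ∃ c, E c ∧ c.1 ≠ 0) : PA E := by
  obtain ⟨⟨a, b⟩, hab, hne⟩ := hx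
  obtain ⟨⟨a', b'⟩, hab', hne'⟩ := hy
  obtain ⟨⟨u, r⟩, hur, hu⟩ := lp
  have hX : PA E ∨ PB E ∨ PV E := by
    rcases sign_caseX a b hne with ⟨h1, h2⟩ | ⟨h1, h2⟩ | ⟨h1, h2⟩
    · exact Or.inl ⟨a, h1, by rwa [h2] at hab⟩
    · exact Or.inr (Or.inl ⟨b, h2, by rwa [h1] at hab⟩)
    · exact Or.inr (Or.inr ⟨a, h1, by rwa [h2] at hab⟩)
  have hY : PA E ∨ PB E ∨ PW E := by
    rcases sign_caseY a' b' hne' with ⟨h1, h2⟩ | ⟨h1, h2⟩ | ⟨h1, h2⟩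
    · exact Or.inl ⟨a', h1, by rwa [h2] at hab'⟩
    · exact Or.inr (Or.inl ⟨b', h2, by rwa [h1] at hab'⟩)
    · exact Or.inr (Or.inr ⟨a', h1, by rwa [h2] at hab'⟩)
  have hL : PA E ∨ PV E ∨ PW E := by
    rcases sign_caseL u r hu with h | h | h
    · exact Or.inl ⟨u, hu, by rwa [h] at hur⟩
    · exact Or.inr (Or.inl ⟨u, hu, by rwa [h] at hur⟩)
    · exact Or.inr (Or.inr ⟨u, hu, by rwa [h] at hur⟩)
  rcases hX with h | h | hV
  · exact h
  · -- PB
    rcases hY with h' | h' | hW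
    · exact h'
    · rcases hL with h'' | h'' | h''
      · exact h''
      · exact pb_pv hEneg hEs hEf h h''
      · exact pb_pw hEneg hEs hEf h h''
    · exact pb_pw hEneg hEs hEf h hW
  · -- PV
    rcases hY with h' | h' | hW
    · exact h'
    · exact pb_pv hEneg hEs hEf h' hV
    · exact pv_pw hEneg hEs hV hW

lemma pairE
    (hE0 : E (0,0))
    (hEneg : ∀ a b, E (a, b) → E (-a, -b))
    (hEs : ∀ a b a' b', E (a,b) → E (a',b') → E (sop a a', sop b b'))
    (hEf : ∀ a b a' b', E (a,b) → E (a',b') → E (fop a a', fop b b'))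
    (hx : ∃ c, E c ∧ c.1 ≠ c.2) (hy : ∃ c, E c ∧ c.1 ≠ -c.2)
    (lp : ∃ c, E c ∧ c.1 ≠ 0) (lq : ∃ c, E c ∧ c.2 ≠ 0) :
    ∀ c, E c := by
  have hA : PA E := stepA hEneg hEs hEf hx hy lp
  have hB : PB E := by
    let E' : SignType × SignType → Prop := fun c => E (c.2, c.1)
    have hA' : PA E' := by
      refine stepA (E := E') (fun a b h => hEneg _ _ h) (fun a b a' b' h h' => hEs _ _ _ _ h h')
        (fun a b a' b' h h' => hEf _ _ _ _ h h') ?_ ?_ ?_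
      · obtain ⟨⟨a, b⟩, h, hne⟩ := hx
        exact ⟨(b, a), h, fun hh => hne hh.symm⟩
      · obtain ⟨⟨a, b⟩, h, hne⟩ := hy
        refine ⟨(b, a), h, fun hh => hne ?_⟩
        simp only at hh
        rw [hh, neg_neg]
      · obtain ⟨⟨a, b⟩, h, hne⟩ := lq
        exact ⟨(b, a), h, hne⟩
    obtain ⟨a, ha, hEa⟩ := hA'
    exact ⟨a, ha, hEa⟩
  rintro ⟨u, v⟩
  by_cases hu : u = 0
  · by_cases hv : v = 0
    · rw [hu, hv]; exact hE0
    · rw [hu]; exact pb_any hEneg hB v hv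
  · by_cases hv : v = 0
    · rw [hv]; exact pa_any hEneg hA u hu
    · have h1 : E (u, 0) := pa_any hEneg hA u hu
      have h2 : E (0, v) := pb_any hEneg hB v hv
      have := hEf _ _ _ _ h1 h2
      rwa [fop_zero_right, fop_zero_left] at this

end PairE
end Cube
namespace Cube

section Classify

open Classical

variable {n : ℕ} {A : Set (Cube n)}

/-- `i` is a live coordinate for `A`. -/
def live (A : Set (Cube n)) (i : Fin n) : Prop := ∃ x ∈ A, ev x i ≠ 0

/-- two coordinates are linked in `A`. -/
def linked (A : Set (Cube n)) (i j : Fin n) : Prop :=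
  (∀ x ∈ A, ev x i = ev x j) ∨ (∀ x ∈ A, ev x i = -(ev x j))

lemma sign_nn : ∀ a : SignType, -(-a) = a := by decide

lemma linked_refl (i : Fin n) : linked A i i := Or.inl (fun _ _ => rfl)

lemma linked_symm {i j : Fin n} (h : linked A i j) : linked A j i := by
  rcases h with h | h
  · exact Or.inl (fun x hx => (h x hx).symm)
  · exact Or.inr (fun x hx => by rw [h x hx, sign_nn])

lemma linked_trans {i j k : Fin n} (h : linked A i j) (h' : linked A j k) :
    linked A i k := by
  rcases h with h | h <;> rcases h' with h' | h'
  · exact Or.inl (fun x hx => (h x hx).trans (h' x hx))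
  · exact Or.inr (fun x hx => (h x hx).trans (h' x hx))
  · exact Or.inr (fun x hx => by rw [h x hx, h' x hx])
  · exact Or.inl (fun x hx => by rw [h x hx, h' x hx, sign_nn])

lemma not_live_eq_zero {i : Fin n} (h : ¬ live A i) {x : Cube n} (hx : x ∈ A) :
    ev x i = 0 := by
  by_contra hc
  exact h ⟨x, hx, hc⟩

/-- the setoid of linked live coordinates. -/
def lsetoid (A : Set (Cube n)) : Setoid {i : Fin n // live A i} :=
  ⟨fun i j => linked A i.1 j.1, ⟨fun _ => linked_refl _, linked_symm, linked_trans⟩⟩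

/-- index type: classes of linked live coordinates. -/
def Idx (A : Set (Cube n)) : Type _ := Quotient (lsetoid A)

instance : Finite (Idx A) := Quotient.finite _

/-- a representative coordinate for each class. -/
noncomputable def rep (A : Set (Cube n)) (c : Idx A) : Fin n :=
  (Quotient.out (s := lsetoid A) c).1

lemma live_rep (c : Idx A) : live A (rep A c) := (Quotient.out (s := lsetoid A) c).2

lemma linked_rep {i : Fin n} (h : live A i) :
    linked A i (rep A (Quotient.mk (lsetoid A) ⟨i, h⟩)) :=
  linked_symm (Quotient.mk_out (s := lsetoid A) ⟨i, h⟩)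

lemma rep_not_linked {c c' : Idx A} (h : c ≠ c') : ¬ linked A (rep A c) (rep A c') := by
  intro hl
  exact h (by
    have := Quotient.sound (s := lsetoid A) hl
    exact (Quotient.out_eq (s := lsetoid A) c).symm.trans
      (this.trans (Quotient.out_eq (s := lsetoid A) c')))

/-- evaluation on class representatives. -/
noncomputable def proj (A : Set (Cube n)) (x : Cube n) : Idx A → SignType :=
  fun c => ev x (rep A c)

variable (hT : ⊤ ∈ A) (hS : ∀ x ∈ A, ∀ y ∈ A, x ⊔ y ∈ A)
  (hD : ∀ x ∈ A, ∀ y ∈ A, delta x y ∈ A)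

lemma dop_zero : ∀ b : SignType, dop 0 b = -b := by decide
lemma dop_neg : ∀ a b : SignType, dop a (-b) = fop a b := by decide

include hT hD in
lemma neg_mem {x : Cube n} (hx : x ∈ A) : delta ⊤ x ∈ A := hD ⊤ hT x hx

lemma ev_negC {x : Cube n} (i : Fin n) : ev (delta ⊤ x) i = -(ev x i) := by
  rw [ev_delta, ev_top, dop_zero]

include hT hD in
lemma fC_mem {x y : Cube n} (hx : x ∈ A) (hy : y ∈ A) : delta x (delta ⊤ y) ∈ A :=
  hD x hx _ (neg_mem hT hD hy)

lemma ev_fC {x y : Cube n} (i : Fin n) :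
    ev (delta x (delta ⊤ y)) i = fop (ev x i) (ev y i) := by
  rw [ev_delta, ev_negC, dop_neg]

/-- pointwise majority operation -/
def mop (a b c : SignType) : SignType := fop (sop a b) (fop (sop a c) (sop b c))

/-- majority element -/
def majC (x y z : Cube n) : Cube n :=
  delta (x ⊔ y) (delta ⊤ (delta (x ⊔ z) (delta ⊤ (y ⊔ z))))

include hT hS hD in
lemma majC_mem {x y z : Cube n} (hx : x ∈ A) (hy : y ∈ A) (hz : z ∈ A) :
    majC x y z ∈ A :=
  fC_mem hT hD (hS x hx y hy) (fC_mem hT hD (hS x hx z hz) (hS y hy z hz))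

lemma ev_majC (x y z : Cube n) (i : Fin n) :
    ev (majC x y z) i = mop (ev x i) (ev y i) (ev z i) := by
  rw [majC, mop, ev_fC, ev_sup]
  congr 1
  rw [ev_fC, ev_sup, ev_sup]

lemma mop_maj1 : ∀ u w : SignType, mop u u w = u := by decide
lemma mop_maj2 : ∀ u w : SignType, mop u w u = u := by decide
lemma mop_maj3 : ∀ u w : SignType, mop w u u = u := by decide

include hT hS hD in
lemma pair_surj {p q : Fin n} (hpq : ¬ linked A p q) (lp : live A p) (lq : live A q) :
    ∀ u v : SignType, ∃ x ∈ A, ev x p = u ∧ ev x q = v := by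
  have key : ∀ c : SignType × SignType, ∃ x ∈ A, ev x p = c.1 ∧ ev x q = c.2 := by
    apply pairE
    · exact ⟨⊤, hT, ev_top p, ev_top q⟩
    · rintro a b ⟨x, hx, h1, h2⟩
      exact ⟨delta ⊤ x, neg_mem hT hD hx, by rw [ev_negC, h1], by rw [ev_negC, h2]⟩
    · rintro a b a' b' ⟨x, hx, h1, h2⟩ ⟨x', hx', h1', h2'⟩
      exact ⟨x ⊔ x', hS x hx x' hx', by rw [ev_sup, h1, h1'], by rw [ev_sup, h2, h2']⟩
    · rintro a b a' b' ⟨x, hx, h1, h2⟩ ⟨x', hx', h1', h2'⟩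
      exact ⟨delta x (delta ⊤ x'), fC_mem hT hD hx hx',
        by rw [ev_fC, h1, h1'], by rw [ev_fC, h2, h2']⟩
    · rw [linked, not_or] at hpq
      obtain ⟨h1, _⟩ := hpq
      push_neg at h1
      obtain ⟨x, hx, hne⟩ := h1
      exact ⟨(ev x p, ev x q), ⟨x, hx, rfl, rfl⟩, hne⟩
    · rw [linked, not_or] at hpq
      obtain ⟨_, h2⟩ := hpq
      push_neg at h2
      obtain ⟨x, hx, hne⟩ := h2
      refine ⟨(ev x p, ev x q), ⟨x, hx, rfl, rfl⟩, ?_⟩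
      simpa [neg_eq_iff_eq_neg] using hne
    · obtain ⟨x, hx, hne⟩ := lp
      exact ⟨(ev x p, ev x q), ⟨x, hx, rfl, rfl⟩, hne⟩
    · obtain ⟨x, hx, hne⟩ := lq
      exact ⟨(ev x p, ev x q), ⟨x, hx, rfl, rfl⟩, hne⟩
  exact fun u v => key (u, v)

include hT hD in
lemma single_surj {p : Fin n} (lp : live A p) (u : SignType) :
    ∃ x ∈ A, ev x p = u := by
  obtain ⟨w, hw, hne⟩ := lp
  by_cases hu : u = 0
  · exact ⟨⊤, hT, by rw [hu, ev_top]⟩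
  · rcases sign_pm u (ev w p) hu hne with h | h
    · exact ⟨w, hw, h⟩
    · exact ⟨delta ⊤ w, neg_mem hT hD hw, by rw [ev_negC, h]⟩

include hT hS hD in
/-- Baker–Pixley style surjectivity of the projection onto representatives. -/
lemma proj_surj_on (T : Finset (Idx A)) (g : Idx A → SignType) :
    ∃ x ∈ A, ∀ c ∈ T, ev x (rep A c) = g c := by
  induction T using Finset.strongInduction with
  | _ T ih =>
    by_cases h0 : T.card = 0
    · exact ⟨⊤, hT, fun c hc => absurd hc (by simp [Finset.card_eq_zero.mp h0])⟩
    by_cases h1 : T.card = 1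
    · obtain ⟨c, rfl⟩ := Finset.card_eq_one.mp h1
      obtain ⟨x, hx, hxc⟩ := single_surj hT hD (live_rep c) (g c)
      exact ⟨x, hx, fun d hd => by rw [Finset.mem_singleton.mp hd]; exact hxc⟩
    by_cases h2 : T.card = 2
    · obtain ⟨a, b, hab, rfl⟩ := Finset.card_eq_two.mp h2
      obtain ⟨x, hx, hxa, hxb⟩ := pair_surj hT hS hD (rep_not_linked hab)
        (live_rep a) (live_rep b) (g a) (g b)
      refine ⟨x, hx, fun d hd => ?_⟩
      rcases Finset.mem_insert.mp hd with rfl | hd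
      · exact hxa
      · rw [Finset.mem_singleton.mp hd]; exact hxb
    have h3 : 3 ≤ T.card := by omega
    obtain ⟨S, hST, hS3⟩ := Finset.exists_subset_card_eq h3
    obtain ⟨a, b, c, hab, hac, hbc, rfl⟩ := Finset.card_eq_three.mp hS3
    have haT : a ∈ T := hST (by simp)
    have hbT : b ∈ T := hST (by simp)
    have hcT : c ∈ T := hST (by simp)
    obtain ⟨xa, hxaA, hxa⟩ := ih (T.erase a) (Finset.erase_ssubset haT)
    obtain ⟨xb, hxbA, hxb⟩ := ih (T.erase b) (Finset.erase_ssubset hbT)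
    obtain ⟨xc, hxcA, hxc⟩ := ih (T.erase c) (Finset.erase_ssubset hcT)
    refine ⟨majC xa xb xc, majC_mem hT hS hD hxaA hxbA hxcA, fun d hd => ?_⟩
    rw [ev_majC]
    by_cases hda : d = a
    · subst hda
      rw [hxb d (Finset.mem_erase.mpr ⟨hab, hd⟩), hxc d (Finset.mem_erase.mpr ⟨hac, hd⟩)]
      exact mop_maj3 _ _
    by_cases hdb : d = b
    · subst hdb
      rw [hxa d (Finset.mem_erase.mpr ⟨fun h => hab h.symm, hd⟩),
        hxc d (Finset.mem_erase.mpr ⟨hbc, hd⟩)]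
      exact mop_maj2 _ _
    · rw [hxa d (Finset.mem_erase.mpr ⟨hda, hd⟩), hxb d (Finset.mem_erase.mpr ⟨hdb, hd⟩)]
      exact mop_maj1 _ _

include hT hS hD in
lemma proj_surj (g : Idx A → SignType) : ∃ x ∈ A, proj A x = g := by
  letI : Fintype (Idx A) := Fintype.ofFinite _
  obtain ⟨x, hx, h⟩ := proj_surj_on hT hS hD Finset.univ g
  exact ⟨x, hx, funext fun c => h c (Finset.mem_univ c)⟩

lemma proj_inj {x y : Cube n} (hx : x ∈ A) (hy : y ∈ A) (h : proj A x = proj A y) :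
    x = y := by
  apply ext_ev
  intro i
  by_cases hl : live A i
  · have he := congrFun h (Quotient.mk (lsetoid A) ⟨i, hl⟩)
    rcases linked_rep hl with hq | hq
    · rw [hq x hx, hq y hy]; exact he
    · rw [hq x hx, hq y hy]
      exact congrArg Neg.neg he
  · rw [not_live_eq_zero hl hx, not_live_eq_zero hl hy]

lemma le_iff_proj {x y : Cube n} (hx : x ∈ A) (hy : y ∈ A) :
    x ≤ y ↔ ∀ c, proj A y c = 0 ∨ proj A x c = proj A y c := by
  rw [le_iff_ev]
  constructor
  · intro h c
    exact h (rep A c)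
  · intro h i
    by_cases hl : live A i
    · have hc := h (Quotient.mk (lsetoid A) ⟨i, hl⟩)
      rcases linked_rep hl with hq | hq
      · rw [hq x hx, hq y hy]; exact hc
      · rcases hc with hc | hc
        · left
          rw [hq y hy]
          show -(proj A y _) = 0
          rw [hc, neg_zero]
        · right
          rw [hq x hx, hq y hy]
          show -(proj A x _) = -(proj A y _)
          rw [hc]
    · left
      exact not_live_eq_zero hl hy

lemma proj_top : proj A (⊤ : Cube n) = fun _ => 0 := funext fun c => ev_top _

lemma ne_top_iff_proj {x : Cube n} (hx : x ∈ A) :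
    x ≠ ⊤ ↔ ∃ c, proj A x c ≠ 0 := by
  constructor
  · intro hne
    by_contra hc
    push_neg at hc
    have : ∃ i, ev x i ≠ 0 := by
      by_contra hc'
      push_neg at hc'
      exact hne (ext_ev (fun i => by rw [hc' i, ev_top]))
    obtain ⟨i, hi⟩ := this
    have hl : live A i := ⟨x, hx, hi⟩
    rcases linked_rep hl with hq | hq
    · exact hi (by rw [hq x hx]; exact hc _)
    · refine hi ?_
      rw [hq x hx]
      have h0 : ev x (rep A (Quotient.mk (lsetoid A) ⟨i, hl⟩)) = 0 := hc _
      rw [h0, neg_zero]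
  · rintro ⟨c, hc⟩ rfl
    exact hc (congrFun proj_top c)

include hT hS hD in
lemma mem_coAt_iff {x : Cube n} (hx : x ∈ A) :
    x ∈ coAt A ↔ ∃ c, proj A x c ≠ 0 ∧ ∀ d, d ≠ c → proj A x d = 0 := by
  constructor
  · rintro ⟨-, hxne, hmax⟩
    obtain ⟨c, hc⟩ := (ne_top_iff_proj hx).mp hxne
    refine ⟨c, hc, fun d hdc => ?_⟩
    by_contra hd
    obtain ⟨b, hbA, hb⟩ := proj_surj hT hS hD (fun e => if e = c then proj A x c else 0)
    have hbne : b ≠ ⊤ := (ne_top_iff_proj hbA).mpr ⟨c, by rw [hb]; simpa using hc⟩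
    have hxb : x ≤ b := by
      rw [le_iff_proj hx hbA]
      intro e
      by_cases he : e = c
      · right; rw [hb, he]; simp
      · left; rw [hb]; simp [he]
    have := hmax b hbA hbne hxb
    rw [← this, hb] at hd
    simp [hdc] at hd
  · rintro ⟨c, hc, hall⟩
    refine ⟨hx, (ne_top_iff_proj hx).mpr ⟨c, hc⟩, fun b hbA hbne hxb => ?_⟩
    rw [le_iff_proj hx hbA] at hxb
    have hbz : ∀ d, d ≠ c → proj A b d = 0 := by
      intro d hdc
      rcases hxb d with h | h
      · exact h
      · rw [← h]; exact hall d hdc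
    have hbc : proj A b c = proj A x c := by
      rcases hxb c with h | h
      · exfalso
        obtain ⟨e, he⟩ := (ne_top_iff_proj hbA).mp hbne
        by_cases hec : e = c
        · rw [hec] at he; exact he h
        · exact he (hbz e hec)
      · exact h.symm
    refine proj_inj hbA hx (funext fun d => ?_)
    by_cases hdc : d = c
    · rw [hdc]; exact hbc
    · rw [hbz d hdc, hall d hdc]

include hT hS hD in
lemma card_A_eq : Nat.card ↥A = 3 ^ Nat.card (Idx A) := by
  have hbij : Function.Bijective (fun x : ↥A => proj A x.1) := by
    constructor
    · intro x y h
      exact Subtype.ext (proj_inj x.2 y.2 h)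
    · intro g
      obtain ⟨x, hx, h⟩ := proj_surj hT hS hD g
      exact ⟨⟨x, hx⟩, h⟩
  rw [Nat.card_congr (Equiv.ofBijective _ hbij), Nat.card_fun]
  congr 1
  rw [Nat.card_eq_fintype_card]
  decide

include hT hS hD in
lemma card_coAt : (coAt A).ncard = 2 * Nat.card (Idx A) := by
  classical
  have hbij : ∃ F : Idx A × {s : SignType // s ≠ 0} → ↥(coAt A), Function.Bijective F := by
    have hpick : ∀ p : Idx A × {s : SignType // s ≠ 0},
        ∃ x ∈ A, proj A x = (fun d => if d = p.1 then p.2.1 else 0) :=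
      fun p => proj_surj hT hS hD _
    choose f hfA hfproj using hpick
    have hfco : ∀ p, f p ∈ coAt A := by
      intro p
      rw [mem_coAt_iff hT hS hD (hfA p)]
      exact ⟨p.1, by rw [hfproj]; simpa using p.2.2, fun d hd => by rw [hfproj]; simp [hd]⟩
    refine ⟨fun p => ⟨f p, hfco p⟩, ?_, ?_⟩
    · rintro ⟨c, s⟩ ⟨c', s'⟩ h
      have hp : proj A (f (c, s)) = proj A (f (c', s')) :=
        congrArg (proj A) (congrArg Subtype.val h)
      rw [hfproj, hfproj] at hp
      have hcc : c = c' := by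
        by_contra hne
        have := congrFun hp c
        simp [hne] at this
        exact s.2 this
      subst hcc
      have := congrFun hp c
      simp at this
      exact Prod.ext rfl (Subtype.ext this)
    · rintro ⟨x, hxco⟩
      have hxA : x ∈ A := hxco.1
      obtain ⟨c, hc, hall⟩ := (mem_coAt_iff hT hS hD hxA).mp hxco
      refine ⟨(c, ⟨proj A x c, hc⟩), ?_⟩
      apply Subtype.ext
      apply proj_inj (hfA _) hxA
      rw [hfproj]
      funext d
      by_cases hdc : d = c
      · subst hdc; simp
      · rw [hall d hdc]; simp [hdc]
  obtain ⟨F, hF⟩ := hbij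
  have h2 : Nat.card {s : SignType // s ≠ 0} = 2 := by
    rw [Nat.card_eq_fintype_card]
    decide
  rw [← Nat.card_coe_set_eq, Nat.card_congr (Equiv.ofBijective F hF).symm,
    Nat.card_prod, h2, Nat.mul_comm]

end Classify
end Cube
namespace Cube

variable {n : ℕ}

instance : Finite (Cube n) :=
  Finite.of_injective (fun x => (x.pos, x.neg))
    (fun x y h => Cube.ext (congrArg Prod.fst h) (congrArg Prod.snd h))

lemma sign_sop_neg : ∀ a : SignType, sop a (-a) = 0 := by decide
lemma sign_dop1 : ∀ a : SignType, dop a 0 = a := by decide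
lemma sign_dop2 : ∀ a : SignType, dop a a = a := by decide
lemma sign_dop3 : ∀ a : SignType, dop a (-a) = a := by decide
lemma sign_dop4 : ∀ a : SignType, dop (-a) a = -a := by decide
lemma sign_dop5 : ∀ a : SignType, dop 0 (-a) = a := by decide

lemma sup_negC (x : Cube n) : x ⊔ delta ⊤ x = ⊤ :=
  ext_ev fun i => by rw [ev_sup, ev_negC, ev_top, sign_sop_neg]

lemma negC_negC (x : Cube n) : delta ⊤ (delta ⊤ x) = x :=
  ext_ev fun i => by rw [ev_negC, ev_negC, sign_nn]

lemma delta_top_right (x : Cube n) : delta x ⊤ = x :=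
  ext_ev fun i => by rw [ev_delta, ev_top, sign_dop1]

lemma delta_self (x : Cube n) : delta x x = x :=
  ext_ev fun i => by rw [ev_delta, sign_dop2]

lemma delta_negC_right (x : Cube n) : delta x (delta ⊤ x) = x :=
  ext_ev fun i => by rw [ev_delta, ev_negC, sign_dop3]

lemma delta_negC_left (x : Cube n) : delta (delta ⊤ x) x = delta ⊤ x :=
  ext_ev fun i => by rw [ev_delta (delta ⊤ x) x, ev_negC, sign_dop4]

lemma top_eq_iff_ev {x : Cube n} : x = ⊤ ↔ ∀ i, ev x i = 0 := by
  constructor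
  · rintro rfl i; exact ev_top i
  · intro h; exact ext_ev fun i => by rw [h i, ev_top]

lemma negC_eq_self {x : Cube n} (h : delta ⊤ x = x) : x = ⊤ := by
  rw [top_eq_iff_ev]
  intro i
  have := congrArg (fun y => ev y i) h
  simp only [ev_negC] at this
  revert this
  rcases (ev x i) with _ | _ | _ <;> decide

lemma triple_isMRSub (x : Cube n) : IsMRSub ({⊤, x, delta ⊤ x} : Set (Cube n)) := by
  rw [isMRSub_iff]
  refine ⟨Or.inl rfl, ?_, ?_⟩
  · intro a ha b hb
    simp only [Set.mem_insert_iff, Set.mem_singleton_iff] at ha hb ⊢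
    rcases ha with ha | ha | ha <;> rcases hb with hb | hb | hb <;> rw [ha, hb]
    · exact Or.inl (top_sup_eq ⊤)
    · exact Or.inl (top_sup_eq x)
    · exact Or.inl (top_sup_eq _)
    · exact Or.inl (sup_top_eq x)
    · exact Or.inr (Or.inl (by rw [sup_idem]))
    · exact Or.inl (sup_negC x)
    · exact Or.inl (sup_top_eq _)
    · exact Or.inl (by rw [sup_comm]; exact sup_negC x)
    · exact Or.inr (Or.inr (by rw [sup_idem]))
  · intro a ha b hb
    simp only [Set.mem_insert_iff, Set.mem_singleton_iff] at ha hb ⊢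
    rcases ha with ha | ha | ha <;> rcases hb with hb | hb | hb <;> rw [ha, hb]
    · exact Or.inl (delta_top_right ⊤)
    · exact Or.inr (Or.inr rfl)
    · exact Or.inr (Or.inl (negC_negC x))
    · exact Or.inr (Or.inl (delta_top_right x))
    · exact Or.inr (Or.inl (delta_self x))
    · exact Or.inr (Or.inl (delta_negC_right x))
    · exact Or.inr (Or.inr (delta_top_right _))
    · exact Or.inr (Or.inr (delta_negC_left x))
    · exact Or.inr (Or.inr (delta_self _))

lemma singleton_top_isMRSub : IsMRSub ({⊤} : Set (Cube n)) := by
  rw [isMRSub_iff]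
  refine ⟨rfl, ?_, ?_⟩
  · rintro a rfl b rfl
    exact sup_idem ⊤
  · rintro a rfl b rfl
    exact delta_top_right ⊤

/-- the atoms of the interval of subalgebras below `A`. -/
def IsAtomSub (A : Set (Cube n)) (Z : {Z : Set (Cube n) // IsMRSub Z ∧ Z ⊆ A}) : Prop :=
  ({⊤} : Set (Cube n)) ⊂ Z.1 ∧
    ∀ W : {Z : Set (Cube n) // IsMRSub Z ∧ Z ⊆ A}, W.1 ⊂ Z.1 → W.1 = {⊤}

lemma top_ssubset_iff {Z : Set (Cube n)} (hZ : IsMRSub Z) :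
    ({⊤} : Set (Cube n)) ⊂ Z ↔ ∃ x ∈ Z, x ≠ ⊤ := by
  constructor
  · rintro ⟨hle, hne⟩
    by_contra hc
    push_neg at hc
    exact hne (fun y hy => by rw [hc y hy]; exact rfl)
  · rintro ⟨x, hx, hxne⟩
    refine ⟨by simpa using hZ.1, fun hsub => hxne (hsub hx)⟩

lemma isAtomSub_iff {A : Set (Cube n)} (hA : IsMRSub A)
    (Z : {Z : Set (Cube n) // IsMRSub Z ∧ Z ⊆ A}) :
    IsAtomSub A Z ↔ ∃ x, x ∈ A ∧ x ≠ ⊤ ∧ Z.1 = {⊤, x, delta ⊤ x} := by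
  have hZd := (isMRSub_iff.mp Z.2.1).2.2
  have hZt := Z.2.1.1
  constructor
  · rintro ⟨h1, h2⟩
    obtain ⟨x, hxZ, hxne⟩ := (top_ssubset_iff Z.2.1).mp h1
    have hnxZ : delta ⊤ x ∈ Z.1 := hZd ⊤ hZt x hxZ
    have htri : ({⊤, x, delta ⊤ x} : Set (Cube n)) ⊆ Z.1 := by
      intro y hy
      rcases hy with rfl | rfl | rfl
      · exact hZt
      · exact hxZ
      · exact hnxZ
    rcases eq_or_ne ({⊤, x, delta ⊤ x} : Set (Cube n)) Z.1 with he | hne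
    · exact ⟨x, Z.2.2 hxZ, hxne, he.symm⟩
    · exfalso
      have := h2 ⟨{⊤, x, delta ⊤ x}, triple_isMRSub x, fun y hy => Z.2.2 (htri hy)⟩
        (htri.ssubset_of_ne hne)
      simp only at this
      have hx' : x ∈ ({⊤, x, delta ⊤ x} : Set (Cube n)) := Or.inr (Or.inl rfl)
      rw [this] at hx'
      exact hxne hx'
  · rintro ⟨x, hxA, hxne, hZeq⟩
    constructor
    · rw [top_ssubset_iff Z.2.1]
      exact ⟨x, by rw [hZeq]; exact Or.inr (Or.inl rfl), hxne⟩
    · intro W hW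
      have hWZ : W.1 ⊆ Z.1 := hW.1
      have hWd := (isMRSub_iff.mp W.2.1).2.2
      by_contra hc
      obtain ⟨y, hyW, hyne⟩ := (top_ssubset_iff W.2.1).mp
        ((Set.singleton_subset_iff.mpr W.2.1.1).ssubset_of_ne (Ne.symm hc))
      have hyZ : y ∈ Z.1 := hWZ hyW
      rw [hZeq] at hyZ
      have hboth : x ∈ W.1 ∧ delta ⊤ x ∈ W.1 := by
        rcases hyZ with rfl | rfl | rfl
        · exact absurd rfl hyne
        · exact ⟨hyW, hWd ⊤ W.2.1.1 y hyW⟩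
        · exact ⟨by rw [← negC_negC x]; exact hWd ⊤ W.2.1.1 _ hyW, hyW⟩
      have : Z.1 ⊆ W.1 := by
        rw [hZeq]
        rintro z (rfl | rfl | rfl)
        · exact W.2.1.1
        · exact hboth.1
        · exact hboth.2
      exact hW.2 this

end Cube
namespace Cube

variable {n : ℕ}

lemma negC_top : delta ⊤ (⊤ : Cube n) = ⊤ := delta_top_right ⊤

lemma negC_ne_top {x : Cube n} (hx : x ≠ ⊤) : delta ⊤ x ≠ ⊤ := by
  intro h
  apply hx
  rw [← negC_negC x, h, negC_top]

lemma negC_ne_self {x : Cube n} (hx : x ≠ ⊤) : delta ⊤ x ≠ x :=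
  fun h => hx (negC_eq_self h)

lemma triple_eq_triple_iff {x y : Cube n} (hx : x ≠ ⊤) :
    ({⊤, x, delta ⊤ x} : Set (Cube n)) = {⊤, y, delta ⊤ y} ↔ x = y ∨ x = delta ⊤ y := by
  constructor
  · intro h
    have hxmem : x ∈ ({⊤, y, delta ⊤ y} : Set (Cube n)) := by
      rw [← h]; exact Or.inr (Or.inl rfl)
    rcases hxmem with h' | h' | h'
    · exact absurd h' hx
    · exact Or.inl h'
    · exact Or.inr h'
  · rintro (rfl | rfl)
    · rfl
    · rw [negC_negC, Set.pair_comm (delta ⊤ y) y]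

lemma card_atoms {A : Set (Cube n)} (hA : IsMRSub A) :
    A.ncard = 2 * Nat.card {Z : {Z : Set (Cube n) // IsMRSub Z ∧ Z ⊆ A} // IsAtomSub A Z} + 1 := by
  classical
  have hAT : (⊤ : Cube n) ∈ A := hA.1
  have hAD := (isMRSub_iff.mp hA).2.2
  have hins : A = insert ⊤ (A \ {⊤}) := by
    rw [Set.insert_diff_singleton, Set.insert_eq_self.mpr hAT]
  have hcard : A.ncard = (A \ {⊤}).ncard + 1 := by
    conv_lhs => rw [hins]
    rw [Set.ncard_insert_of_notMem (by simp) (Set.toFinite _)]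
  rw [hcard]
  congr 1
  -- the 2:1 map
  have hsubset : ∀ x : ↥(A \ {⊤}), ({⊤, x.1, delta ⊤ x.1} : Set (Cube n)) ⊆ A := by
    rintro x y (rfl | rfl | rfl)
    · exact hAT
    · exact x.2.1
    · exact hAD ⊤ hAT x.1 x.2.1
  let f : ↥(A \ {⊤}) → {Z : {Z : Set (Cube n) // IsMRSub Z ∧ Z ⊆ A} // IsAtomSub A Z} :=
    fun x => ⟨⟨{⊤, x.1, delta ⊤ x.1}, triple_isMRSub x.1, hsubset x⟩,
      (isAtomSub_iff hA _).mpr ⟨x.1, x.2.1, x.2.2, rfl⟩⟩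
  letI : Fintype ↥(A \ {⊤}) := Fintype.ofFinite _
  letI : Fintype {Z : {Z : Set (Cube n) // IsMRSub Z ∧ Z ⊆ A} // IsAtomSub A Z} :=
    Fintype.ofFinite _
  rw [← Nat.card_coe_set_eq, Nat.card_eq_fintype_card, Nat.card_eq_fintype_card]
  rw [← Finset.card_univ (α := ↥(A \ {⊤})),
    Finset.card_eq_sum_card_fiberwise (f := f) (t := Finset.univ) (fun x _ => Finset.mem_univ _)]
  have hfib : ∀ Z : {Z : {Z : Set (Cube n) // IsMRSub Z ∧ Z ⊆ A} // IsAtomSub A Z},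
      (Finset.univ.filter fun x => f x = Z).card = 2 := by
    intro Z
    obtain ⟨x₀, hx₀A, hx₀ne, hZeq⟩ := (isAtomSub_iff hA Z.1).mp Z.2
    have hnx₀A : delta ⊤ x₀ ∈ A := hAD ⊤ hAT x₀ hx₀A
    have hmem : ∀ x : ↥(A \ {⊤}), f x = Z ↔ (x.1 = x₀ ∨ x.1 = delta ⊤ x₀) := by
      intro x
      rw [← Subtype.coe_inj, ← Subtype.coe_inj]
      show ({⊤, x.1, delta ⊤ x.1} : Set (Cube n)) = Z.1.1 ↔ _
      rw [hZeq]
      exact triple_eq_triple_iff x.2.2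
    have : (Finset.univ.filter fun x => f x = Z) =
        {(⟨x₀, hx₀A, hx₀ne⟩ : ↥(A \ {⊤})), ⟨delta ⊤ x₀, hnx₀A, negC_ne_top hx₀ne⟩} := by
      ext x
      simp only [Finset.mem_filter, Finset.mem_univ, true_and, Finset.mem_insert,
        Finset.mem_singleton]
      rw [hmem x]
      constructor
      · rintro (h | h)
        · exact Or.inl (Subtype.ext h)
        · exact Or.inr (Subtype.ext h)
      · rintro (rfl | rfl)
        · exact Or.inl rfl
        · exact Or.inr rfl
    rw [this, Finset.card_insert_of_notMem (by
      simp only [Finset.mem_singleton, ← Subtype.coe_inj]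
      exact fun h => (negC_ne_self hx₀ne) h.symm), Finset.card_singleton]
  rw [Finset.sum_congr rfl (fun Z _ => hfib Z), Finset.sum_const, Finset.card_univ, smul_eq_mul,
    Nat.mul_comm]

lemma atom_transport {A₁ A₂ : Set (Cube n)} (hA₁ : IsMRSub A₁) (hA₂ : IsMRSub A₂)
    (F : {Z : Set (Cube n) // IsMRSub Z ∧ Z ⊆ A₁} ≃o {Z : Set (Cube n) // IsMRSub Z ∧ Z ⊆ A₂})
    (Z : {Z : Set (Cube n) // IsMRSub Z ∧ Z ⊆ A₁}) (hZ : IsAtomSub A₁ Z) :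
    IsAtomSub A₂ (F Z) := by
  have hb₁le : ∀ W : {Z : Set (Cube n) // IsMRSub Z ∧ Z ⊆ A₁},
      (⟨{⊤}, singleton_top_isMRSub, Set.singleton_subset_iff.mpr hA₁.1⟩ :
        {Z : Set (Cube n) // IsMRSub Z ∧ Z ⊆ A₁}) ≤ W :=
    fun W => Set.singleton_subset_iff.mpr W.2.1.1
  have hb₂le : ∀ W : {Z : Set (Cube n) // IsMRSub Z ∧ Z ⊆ A₂},
      (⟨{⊤}, singleton_top_isMRSub, Set.singleton_subset_iff.mpr hA₂.1⟩ :
        {Z : Set (Cube n) // IsMRSub Z ∧ Z ⊆ A₂}) ≤ W :=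
    fun W => Set.singleton_subset_iff.mpr W.2.1.1
  set b₁ : {Z : Set (Cube n) // IsMRSub Z ∧ Z ⊆ A₁} :=
    ⟨{⊤}, singleton_top_isMRSub, Set.singleton_subset_iff.mpr hA₁.1⟩ with hb₁
  set b₂ : {Z : Set (Cube n) // IsMRSub Z ∧ Z ⊆ A₂} :=
    ⟨{⊤}, singleton_top_isMRSub, Set.singleton_subset_iff.mpr hA₂.1⟩ with hb₂
  have hFb : F b₁ = b₂ := by
    refine le_antisymm ?_ (hb₂le _)
    rw [← F.apply_symm_apply b₂]
    exact F.monotone (hb₁le _)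
  obtain ⟨h1, h2⟩ := hZ
  constructor
  · refine (Set.singleton_subset_iff.mpr (F Z).2.1.1).ssubset_of_ne ?_
    intro he
    have : F Z = b₂ := Subtype.ext he.symm
    have hZb : Z = b₁ := by
      have := congrArg F.symm this
      rwa [F.symm_apply_apply, ← hFb, F.symm_apply_apply] at this
    rw [Set.ssubset_iff_subset_ne] at h1
    exact h1.2 (congrArg Subtype.val hZb).symm
  · intro W hW
    have hWlt : W < F Z := by
      rw [← Subtype.coe_lt_coe]
      exact hW
    have hlt : F.symm W < Z := by
      have := F.symm.lt_iff_lt.mpr hWlt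
      rwa [F.symm_apply_apply] at this
    have : (F.symm W).1 = {⊤} := h2 _ (Subtype.coe_lt_coe.mpr hlt)
    have hWb : F.symm W = b₁ := Subtype.ext this
    have : W = b₂ := by
      have := congrArg F hWb
      rwa [F.apply_symm_apply, hFb] at this
    rw [this]

end Cube
namespace Cube
variable {n : ℕ}

lemma proj_sup' (A : Set (Cube n)) (x y : Cube n) (c : Idx A) :
    proj A (x ⊔ y) c = sop (proj A x c) (proj A y c) := ev_sup x y _

lemma proj_delta' (A : Set (Cube n)) (x y : Cube n) (c : Idx A) :
    proj A (delta x y) c = dop (proj A x c) (proj A y c) := ev_delta x y _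

end Cube

/-- In the poset of MR-subalgebras of `𝓛ₙ`, the intervals `[{𝟙}, A₁]` and
`[{𝟙}, A₂]` are order isomorphic iff `A₁` and `A₂` have the same dimension. -/
theorem interval_iso_iff_dim_eq (n : ℕ) (A₁ A₂ : Set (Cube n))
    (hA₁ : Cube.IsMRSub A₁) (hA₂ : Cube.IsMRSub A₂)
    (hne₁ : A₁ ≠ {⊤}) (hne₂ : A₂ ≠ {⊤}) :
    Nonempty
        ({Z : Set (Cube n) // Cube.IsMRSub Z ∧ Z ⊆ A₁} ≃o
          {Z : Set (Cube n) // Cube.IsMRSub Z ∧ Z ⊆ A₂}) ↔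
      (Cube.coAt A₁).ncard / 2 = (Cube.coAt A₂).ncard / 2 := by
  classical
  obtain ⟨hT₁, hS₁, hD₁⟩ := Cube.isMRSub_iff.mp hA₁
  obtain ⟨hT₂, hS₂, hD₂⟩ := Cube.isMRSub_iff.mp hA₂
  have hco₁ := Cube.card_coAt hT₁ hS₁ hD₁
  have hco₂ := Cube.card_coAt hT₂ hS₂ hD₂
  constructor
  · rintro ⟨F⟩
    have hatoms :
        Nat.card {Z : {Z : Set (Cube n) // Cube.IsMRSub Z ∧ Z ⊆ A₁} // Cube.IsAtomSub A₁ Z}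
          = Nat.card {Z : {Z : Set (Cube n) // Cube.IsMRSub Z ∧ Z ⊆ A₂} //
              Cube.IsAtomSub A₂ Z} := by
      refine Nat.card_congr ⟨fun Z => ⟨F Z.1, Cube.atom_transport hA₁ hA₂ F Z.1 Z.2⟩,
        fun Z => ⟨F.symm Z.1, Cube.atom_transport hA₂ hA₁ F.symm Z.1 Z.2⟩, ?_, ?_⟩
      · intro Z; exact Subtype.ext (F.symm_apply_apply Z.1)
      · intro Z; exact Subtype.ext (F.apply_symm_apply Z.1)
    have hc₁ := Cube.card_atoms hA₁
    have hc₂ := Cube.card_atoms hA₂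
    have hA1c : A₁.ncard = 3 ^ Nat.card (Cube.Idx A₁) := by
      rw [← Nat.card_coe_set_eq]; exact Cube.card_A_eq hT₁ hS₁ hD₁
    have hA2c : A₂.ncard = 3 ^ Nat.card (Cube.Idx A₂) := by
      rw [← Nat.card_coe_set_eq]; exact Cube.card_A_eq hT₂ hS₂ hD₂
    have hpow : 3 ^ Nat.card (Cube.Idx A₁) = 3 ^ Nat.card (Cube.Idx A₂) := by
      rw [← hA1c, ← hA2c, hc₁, hc₂, hatoms]
    have hd : Nat.card (Cube.Idx A₁) = Nat.card (Cube.Idx A₂) :=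
      Nat.pow_right_injective (by norm_num) hpow
    rw [hco₁, hco₂, hd]
  · intro h
    rw [hco₁, hco₂] at h
    have hd : Nat.card (Cube.Idx A₁) = Nat.card (Cube.Idx A₂) := by omega
    letI : Fintype (Cube.Idx A₁) := Fintype.ofFinite _
    letI : Fintype (Cube.Idx A₂) := Fintype.ofFinite _
    have hfc : Fintype.card (Cube.Idx A₁) = Fintype.card (Cube.Idx A₂) := by
      rw [← Nat.card_eq_fintype_card, ← Nat.card_eq_fintype_card]; exact hd
    obtain ⟨e⟩ := Fintype.card_eq.mp hfc
    have hex : ∀ x : Cube n, ∃ y ∈ A₂, Cube.proj A₂ y = fun c => Cube.proj A₁ x (e.symm c) :=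
      fun x => Cube.proj_surj hT₂ hS₂ hD₂ _
    have hex' : ∀ y : Cube n, ∃ x ∈ A₁, Cube.proj A₁ x = fun c => Cube.proj A₂ y (e c) :=
      fun y => Cube.proj_surj hT₁ hS₁ hD₁ _
    choose ψ hψA hψp using hex
    choose ψ' hψ'A hψ'p using hex'
    have hψp' : ∀ x c, Cube.proj A₂ (ψ x) c = Cube.proj A₁ x (e.symm c) :=
      fun x c => congrFun (hψp x) c
    have hψ'p' : ∀ y c, Cube.proj A₁ (ψ' y) c = Cube.proj A₂ y (e c) :=
      fun y c => congrFun (hψ'p y) c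
    have hinv : ∀ x ∈ A₁, ψ' (ψ x) = x := by
      intro x hx
      refine Cube.proj_inj (hψ'A _) hx (funext fun c => ?_)
      rw [hψ'p', hψp', Equiv.symm_apply_apply]
    have hinv' : ∀ y ∈ A₂, ψ (ψ' y) = y := by
      intro y hy
      refine Cube.proj_inj (hψA _) hy (funext fun c => ?_)
      rw [hψp', hψ'p', Equiv.apply_symm_apply]
    have hψtop : ψ ⊤ = ⊤ := by
      refine Cube.proj_inj (hψA _) hT₂ (funext fun c => ?_)
      rw [hψp']
      simp [Cube.proj_top]
    have hψsup : ∀ x y, ψ (x ⊔ y) = ψ x ⊔ ψ y := by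
      intro x y
      refine Cube.proj_inj (hψA _) (hS₂ _ (hψA x) _ (hψA y)) (funext fun c => ?_)
      simp only [hψp', Cube.proj_sup']
    have hψdelta : ∀ x y, ψ (Cube.delta x y) = Cube.delta (ψ x) (ψ y) := by
      intro x y
      refine Cube.proj_inj (hψA _) (hD₂ _ (hψA x) _ (hψA y)) (funext fun c => ?_)
      simp only [hψp', Cube.proj_delta']
    have himg : ∀ Z : {Z : Set (Cube n) // Cube.IsMRSub Z ∧ Z ⊆ A₁},
        Cube.IsMRSub (ψ '' Z.1) ∧ ψ '' Z.1 ⊆ A₂ := by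
      intro Z
      obtain ⟨hZT, hZS, hZD⟩ := Cube.isMRSub_iff.mp Z.2.1
      constructor
      · rw [Cube.isMRSub_iff]
        refine ⟨⟨⊤, hZT, hψtop⟩, ?_, ?_⟩
        · rintro a ⟨x, hx, rfl⟩ b ⟨y, hy, rfl⟩
          exact ⟨x ⊔ y, hZS x hx y hy, hψsup x y⟩
        · rintro a ⟨x, hx, rfl⟩ b ⟨y, hy, rfl⟩
          exact ⟨Cube.delta x y, hZD x hx y hy, hψdelta x y⟩
      · rintro a ⟨x, hx, rfl⟩
        exact hψA x
    have hψ'top : ψ' ⊤ = ⊤ := by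
      refine Cube.proj_inj (hψ'A _) hT₁ (funext fun c => ?_)
      rw [hψ'p']
      simp [Cube.proj_top]
    have hψ'sup : ∀ x y, ψ' (x ⊔ y) = ψ' x ⊔ ψ' y := by
      intro x y
      refine Cube.proj_inj (hψ'A _) (hS₁ _ (hψ'A x) _ (hψ'A y)) (funext fun c => ?_)
      simp only [hψ'p', Cube.proj_sup']
    have hψ'delta : ∀ x y, ψ' (Cube.delta x y) = Cube.delta (ψ' x) (ψ' y) := by
      intro x y
      refine Cube.proj_inj (hψ'A _) (hD₁ _ (hψ'A x) _ (hψ'A y)) (funext fun c => ?_)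
      simp only [hψ'p', Cube.proj_delta']
    have himg' : ∀ Z : {Z : Set (Cube n) // Cube.IsMRSub Z ∧ Z ⊆ A₂},
        Cube.IsMRSub (ψ' '' Z.1) ∧ ψ' '' Z.1 ⊆ A₁ := by
      intro Z
      obtain ⟨hZT, hZS, hZD⟩ := Cube.isMRSub_iff.mp Z.2.1
      constructor
      · rw [Cube.isMRSub_iff]
        refine ⟨⟨⊤, hZT, hψ'top⟩, ?_, ?_⟩
        · rintro a ⟨x, hx, rfl⟩ b ⟨y, hy, rfl⟩
          exact ⟨x ⊔ y, hZS x hx y hy, hψ'sup x y⟩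
        · rintro a ⟨x, hx, rfl⟩ b ⟨y, hy, rfl⟩
          exact ⟨Cube.delta x y, hZD x hx y hy, hψ'delta x y⟩
      · rintro a ⟨x, hx, rfl⟩
        exact hψ'A x
    have hli : ∀ Z : Set (Cube n), Z ⊆ A₁ → ψ' '' (ψ '' Z) = Z := by
      intro Z hZ
      ext y
      constructor
      · rintro ⟨a, ⟨x, hx, rfl⟩, rfl⟩
        rw [hinv x (hZ hx)]
        exact hx
      · intro hy
        exact ⟨ψ y, ⟨y, hy, rfl⟩, hinv y (hZ hy)⟩
    have hri : ∀ Z : Set (Cube n), Z ⊆ A₂ → ψ '' (ψ' '' Z) = Z := by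
      intro Z hZ
      ext y
      constructor
      · rintro ⟨a, ⟨x, hx, rfl⟩, rfl⟩
        rw [hinv' x (hZ hx)]
        exact hx
      · intro hy
        exact ⟨ψ' y, ⟨y, hy, rfl⟩, hinv' y (hZ hy)⟩
    refine ⟨⟨⟨fun Z => ⟨ψ '' Z.1, himg Z⟩, fun Z => ⟨ψ' '' Z.1, himg' Z⟩, ?_, ?_⟩, ?_⟩⟩
    · intro Z
      exact Subtype.ext (hli Z.1 Z.2.2)
    · intro Z
      exact Subtype.ext (hri Z.1 Z.2.2)
    · intro Z W
      simp only [Equiv.coe_fn_mk, Subtype.mk_le_mk]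
      show ψ '' Z.1 ⊆ ψ '' W.1 ↔ Z ≤ W
      constructor
      · intro hsub
        have : Z.1 ⊆ W.1 := by
          intro x hx
          obtain ⟨x', hx', heq⟩ := hsub ⟨x, hx, rfl⟩
          have hxx : x = x' := by
            rw [← hinv x (Z.2.2 hx), ← hinv x' (W.2.2 hx'), heq]
          rw [hxx]
          exact hx'
        exact this
      · intro hsub
        exact Set.image_mono hsub
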